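/- Let K = HahnSeries ℝ ℂ with additive valuation v = addVal. Let n ≥ 3 be a natural number, let λ₂ > λ₃ be real numbers, and let r be a real number. Let b, c, d, z be nonzero elements of K with v(b) = λ₂, v(c) = λ₃, v(d) = r + n·λ₃. Suppose c^(n−2)·z⁶·(z+b)ⁿ·(n·z+b)^(n−2) = bⁿ·d², v(z) = λ₂, and v(z+b) > λ₂. Then v(n·z+b) = λ₂ and v(z+b) = (2r − 4λ₂ + (n+2)λ₃)/n. -/
import Mathlib

open HahnSeries

lemma addVal_natCast (m : ℕ) (hm : m ≠ 0) : addVal ℝ ℂ (m : HahnSeries ℝ ℂ) = 0 := by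
  have hC : (m : HahnSeries ℝ ℂ) = HahnSeries.C (m : ℂ) := by simp
  have h0 : (m : HahnSeries ℝ ℂ) ≠ 0 := by
    rw [hC]; exact HahnSeries.C_ne_zero (Nat.cast_ne_zero.mpr hm)
  rw [addVal_apply_of_ne h0, hC, order_C]; exact WithTop.coe_zero

lemma nsmul_coe (k : ℕ) (a : ℝ) : k • (a : WithTop ℝ) = ((k * a : ℝ) : WithTop ℝ) := by
  induction k with
  | zero => simp
  | succ k ih =>
      rw [succ_nsmul, ih, ← WithTop.coe_add]
      norm_num [add_mul]

/-- valuations in Case (b)(i) of the critical point analysis, in the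
Hahn series field `HahnSeries ℝ ℂ`. -/
theorem stmt_5 (n : ℕ) (hn : 3 ≤ n) (l2 l3 r : ℝ) (hl : l2 > l3)
    (b c d z : HahnSeries ℝ ℂ)
    (hb : b ≠ 0) (hc : c ≠ 0) (hd : d ≠ 0) (hz : z ≠ 0)
    (hvb : addVal ℝ ℂ b = (l2 : WithTop ℝ))
    (hvc : addVal ℝ ℂ c = (l3 : WithTop ℝ))
    (hvd : addVal ℝ ℂ d = ((r + n * l3 : ℝ) : WithTop ℝ))
    (heq : c ^ (n - 2) * z ^ 6 * (z + b) ^ n * ((n : HahnSeries ℝ ℂ) * z + b) ^ (n - 2)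
        = b ^ n * d ^ 2)
    (hvz : addVal ℝ ℂ z = (l2 : WithTop ℝ))
    (hvzb : (l2 : WithTop ℝ) < addVal ℝ ℂ (z + b)) :
    addVal ℝ ℂ ((n : HahnSeries ℝ ℂ) * z + b) = (l2 : WithTop ℝ) ∧
    addVal ℝ ℂ (z + b) = (((2 * r - 4 * l2 + ((n : ℝ) + 2) * l3) / n : ℝ) : WithTop ℝ) := by
  set v := addVal ℝ ℂ
  -- first part
  have hrw : (n : HahnSeries ℝ ℂ) * z + b = ((n - 1 : ℕ) : HahnSeries ℝ ℂ) * z + (z + b) := by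
    push_cast [Nat.cast_sub (by omega : 1 ≤ n)]
    ring
  have hvm : v (((n - 1 : ℕ) : HahnSeries ℝ ℂ) * z) = (l2 : WithTop ℝ) := by
    rw [v.map_mul, addVal_natCast (n - 1) (by omega), hvz, zero_add]
  have h1 : v ((n : HahnSeries ℝ ℂ) * z + b) = (l2 : WithTop ℝ) := by
    rw [hrw, AddValuation.map_add_eq_of_lt_left _ (by rw [hvm]; exact hvzb), hvm]
  refine ⟨h1, ?_⟩
  -- nonvanishing
  have hzb : z + b ≠ 0 := by
    intro h
    apply hb  -- derive contradiction
    have : b ^ n * d ^ 2 = 0 := by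
      rw [← heq, h, zero_pow (by omega : n ≠ 0)]; ring
    rcases mul_eq_zero.mp this with h' | h'
    · exact pow_eq_zero_iff (by omega : n ≠ 0) |>.mp h'
    · exact absurd (pow_eq_zero_iff (by norm_num : (2:ℕ) ≠ 0) |>.mp h') hd
  -- value of z + b as a real
  set w : ℝ := (z + b).order with hw
  have hvw : v (z + b) = (w : WithTop ℝ) := addVal_apply_of_ne hzb
  -- apply valuation to the equation
  have hval := congrArg v heq
  simp only [v.map_mul, v.map_pow] at hval
  rw [hvb, hvc, hvd, hvz, hvw, h1] at hval
  simp only [nsmul_coe, ← WithTop.coe_add] at hval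
  have hreal := WithTop.coe_inj.mp hval
  have hn' : ((n - 2 : ℕ) : ℝ) = (n : ℝ) - 2 := by
    push_cast [Nat.cast_sub (by omega : 2 ≤ n)]; ring
  rw [hn'] at hreal
  have hnpos : (0 : ℝ) < n := by positivity
  rw [hvw, WithTop.coe_inj]
  push_cast at hreal
  field_simp
  linarith [hreal]
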